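/- arXiv:2505.02838 — 11 statements merged into one kernel-verified Lean document; each statement's English description precedes it below -/
import Mathlib

section
/- Let A, B : X → X be linear operators. Then for every x ∈ X with ⟨x, x⟩ = 1 one has Δ_x(A)·Δ_x(B) ≥ |⟨Ax, Bx⟩ − ⟨Ax, x⟩⟨Bx, x⟩| (p-adic Heisenberg–Robertson–Schrödinger uncertainty principle, Cauchy–Schwarz form). -/
/-- **p-adic Heisenberg–Robertson–Schrödinger uncertainty principle (Cauchy–Schwarz form).**
For linear operators `A B : X → X` on a p-adic Hilbert space and `x` with `⟨x, x⟩ = 1`,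
`Δ_x(A) · Δ_x(B) ≥ |⟨Ax, Bx⟩ − ⟨Ax, x⟩⟨Bx, x⟩|`. -/
theorem padic_HRS_cauchy_schwarz_form
    {K X : Type*} [Field K] [AddCommGroup X] [Module K X]
    (v : AbsoluteValue K ℝ) (hna : IsNonarchimedean v)
    (N : X → ℝ)
    (hN_ultra : ∀ u w : X, N (u + w) ≤ max (N u) (N w))
    (hN_smul : ∀ (a : K) (u : X), N (a • u) = v a * N u)
    (ip : X → X → K)
    (hsymm : ∀ u w : X, ip u w = ip w u)
    (hadd : ∀ u w z : X, ip u (w + z) = ip u w + ip u z)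
    (hsmul : ∀ (a : K) (u w : X), ip u (a • w) = a * ip u w)
    (hcs : ∀ u w : X, v (ip u w) ≤ N u * N w)
    (A B : X →ₗ[K] X) (x : X) (hx : ip x x = 1) :
    N (A x - ip (A x) x • x) * N (B x - ip (B x) x • x) ≥
      v (ip (A x) (B x) - ip (A x) x * ip (B x) x) := by
  have hsub : ∀ u w z : X, ip u (w - z) = ip u w - ip u z := by
    intro u w z
    rw [sub_eq_add_neg, hadd, show (-z) = ((-1 : K) • z) by simp, hsmul]
    ring
  have hsub' : ∀ u w z : X, ip (w - z) u = ip w u - ip z u := by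
    intro u w z
    rw [hsymm, hsub, hsymm u w, hsymm u z]
  have hsmul' : ∀ (c : K) (u w : X), ip (c • u) w = c * ip u w := by
    intro c u w
    rw [hsymm, hsmul, hsymm]
  have key : ip (A x - ip (A x) x • x) (B x - ip (B x) x • x)
      = ip (A x) (B x) - ip (A x) x * ip (B x) x := by
    rw [hsub, hsub', hsub', hsmul, hsmul', hsmul', hsmul, hx, hsymm x (B x)]
    ring
  calc v (ip (A x) (B x) - ip (A x) x * ip (B x) x)
      = v (ip (A x - ip (A x) x • x) (B x - ip (B x) x • x)) := by rw [key]
    _ ≤ _ := hcs _ _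
end

section
/- Let A, B : X → X be self-adjoint linear operators. Then for every x ∈ X with ⟨x, x⟩ = 1 one has Δ_x(A)·Δ_x(B) ≥ |⟨BAx, x⟩ − ⟨Ax, x⟩⟨Bx, x⟩| and Δ_x(A)·Δ_x(B) ≥ |⟨ABx, x⟩ − ⟨Ax, x⟩⟨Bx, x⟩|, and moreover |⟨BAx, x⟩ − ⟨Ax, x⟩⟨Bx, x⟩| = |⟨ABx, x⟩ − ⟨Ax, x⟩⟨Bx, x⟩|. -/
/-- For self-adjoint `A B`, `Δ_x(A)·Δ_x(B) ≥ |⟨BAx, x⟩ − ⟨Ax, x⟩⟨Bx, x⟩|` and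
`Δ_x(A)·Δ_x(B) ≥ |⟨ABx, x⟩ − ⟨Ax, x⟩⟨Bx, x⟩|`, and the two right-hand sides are equal. -/
theorem padic_HRS_selfadjoint_form
    {K X : Type*} [Field K] [AddCommGroup X] [Module K X]
    (v : AbsoluteValue K ℝ) (hna : IsNonarchimedean v)
    (N : X → ℝ)
    (hN_ultra : ∀ u w : X, N (u + w) ≤ max (N u) (N w))
    (hN_smul : ∀ (a : K) (u : X), N (a • u) = v a * N u)
    (ip : X → X → K)
    (hsymm : ∀ u w : X, ip u w = ip w u)
    (hadd : ∀ u w z : X, ip u (w + z) = ip u w + ip u z)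
    (hsmul : ∀ (a : K) (u w : X), ip u (a • w) = a * ip u w)
    (hcs : ∀ u w : X, v (ip u w) ≤ N u * N w)
    (A B : X →ₗ[K] X)
    (hA : ∀ u w : X, ip (A u) w = ip u (A w))
    (hB : ∀ u w : X, ip (B u) w = ip u (B w))
    (x : X) (hx : ip x x = 1) :
    N (A x - ip (A x) x • x) * N (B x - ip (B x) x • x) ≥
        v (ip (B (A x)) x - ip (A x) x * ip (B x) x) ∧
    N (A x - ip (A x) x • x) * N (B x - ip (B x) x • x) ≥
        v (ip (A (B x)) x - ip (A x) x * ip (B x) x) ∧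
    v (ip (B (A x)) x - ip (A x) x * ip (B x) x) =
        v (ip (A (B x)) x - ip (A x) x * ip (B x) x) := by
  set a := ip (A x) x with ha
  set b := ip (B x) x with hb
  have hsub : ∀ u w z : X, ip u (w - z) = ip u w - ip u z := by
    intro u w z
    have h1 : ip u ((w - z) + z) = ip u (w - z) + ip u z := hadd u (w - z) z
    rw [sub_add_cancel] at h1
    linear_combination -h1
  have e1 : ∀ w : X, ip (A x - a • x) w = ip (A x) w - a * ip x w := by
    intro w
    rw [hsymm, hsub, hsmul, hsymm w (A x), hsymm w x]
  have key : ip (A x - a • x) (B x - b • x) = ip (A x) (B x) - a * b := by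
    rw [e1, hsub, hsub, hsmul, hsmul, hx, hsymm x (B x), ← hb, ← ha]
    ring
  have hBA : ip (B (A x)) x = ip (A x) (B x) := by rw [hB]
  have hAB : ip (A (B x)) x = ip (A x) (B x) := by
    rw [hA, hsymm]
  have hcs' := hcs (A x - a • x) (B x - b • x)
  rw [key] at hcs'
  refine ⟨?_, ?_, ?_⟩
  · rw [hBA]; exact hcs'
  · rw [hAB]; exact hcs'
  · rw [hBA, hAB]
end

section
/- Let A, B : X → X be linear operators admitting adjoints A*, B* : X → X (i.e. ⟨Au, v⟩ = ⟨u, A*v⟩ and ⟨Bu, v⟩ = ⟨u, B*v⟩ for all u, v ∈ X). Then for every x ∈ X with ⟨x, x⟩ = 1 one has max{Δ_x(A), Δ_x(B)} ≥ √(|⟨(A*A + B*B)x, x⟩ − (⟨(A+B)x, x⟩² + ⟨(A−B)x, x⟩²)/2|), where the outer |·| is the absolute value of K and √ is the real square root. -/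
/-- For adjointable `A B` (adjoints `A*`, `B*`) and `⟨x, x⟩ = 1`, over a field of
characteristic `≠ 2`:
`max{Δ_x(A), Δ_x(B)} ≥ √(|⟨(A*A + B*B)x, x⟩ − (⟨(A+B)x, x⟩² + ⟨(A−B)x, x⟩²)/2)`. -/
theorem padic_uncertainty_adjoint_sum_form
    {K X : Type*} [Field K] [AddCommGroup X] [Module K X]
    (v : AbsoluteValue K ℝ) (hna : IsNonarchimedean v)
    (N : X → ℝ)
    (hN_ultra : ∀ u w : X, N (u + w) ≤ max (N u) (N w))
    (hN_smul : ∀ (a : K) (u : X), N (a • u) = v a * N u)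
    (ip : X → X → K)
    (hsymm : ∀ u w : X, ip u w = ip w u)
    (hadd : ∀ u w z : X, ip u (w + z) = ip u w + ip u z)
    (hsmul : ∀ (a : K) (u w : X), ip u (a • w) = a * ip u w)
    (hcs : ∀ u w : X, v (ip u w) ≤ N u * N w)
    (h2 : (2 : K) ≠ 0)
    (A B Astar Bstar : X →ₗ[K] X)
    (hA : ∀ u w : X, ip (A u) w = ip u (Astar w))
    (hB : ∀ u w : X, ip (B u) w = ip u (Bstar w))
    (x : X) (hx : ip x x = 1) :
    max (N (A x - ip (A x) x • x)) (N (B x - ip (B x) x • x)) ≥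
      Real.sqrt (v (ip ((Astar ∘ₗ A + Bstar ∘ₗ B) x) x -
        (ip ((A + B) x) x ^ 2 + ip ((A - B) x) x ^ 2) / 2)) := by
  -- basic norm facts
  have hN0 : N 0 = 0 := by
    have := hN_smul 0 x
    simpa using this
  have hNnonneg : ∀ u : X, 0 ≤ N u := by
    intro u
    have h : N (u + (-1 : K) • u) ≤ max (N u) (N ((-1 : K) • u)) := hN_ultra u _
    have h1 : N ((-1 : K) • u) = N u := by
      rw [hN_smul]; simp
    rw [h1, max_self] at h
    have h0 : u + (-1 : K) • u = 0 := by simp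
    rw [h0, hN0] at h
    exact h
  -- bilinearity in first argument
  have hadd' : ∀ u w z : X, ip (u + w) z = ip u z + ip w z := by
    intro u w z; rw [hsymm, hadd, hsymm z u, hsymm z w]
  have hsmul' : ∀ (a : K) (u w : X), ip (a • u) w = a * ip u w := by
    intro a u w; rw [hsymm, hsmul, hsymm]
  have hsub' : ∀ u w z : X, ip (u - w) z = ip u z - ip w z := by
    intro u w z
    rw [sub_eq_add_neg, hadd', ← neg_one_smul K w, hsmul']
    ring
  have hsub : ∀ u w z : X, ip u (w - z) = ip u w - ip u z := by
    intro u w z; rw [hsymm, hsub', hsymm w u, hsymm z u]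
  -- key expansion
  have key : ∀ y : X, ip (y - ip y x • x) (y - ip y x • x) = ip y y - (ip y x) ^ 2 := by
    intro y
    rw [hsub, hsub', hsub', hsmul, hsmul, hsmul', hsmul', hx, hsymm x y]
    ring
  set a := ip (A x) x with ha
  set b := ip (B x) x with hb
  set dA := A x - a • x with hdA
  set dB := B x - b • x with hdB
  -- compute the inner expression
  have hAx : ip (Astar (A x)) x = ip (A x) (A x) := by
    rw [hsymm, ← hA]
  have hBx : ip (Bstar (B x)) x = ip (B x) (B x) := by
    rw [hsymm, ← hB]
  have hE : ip ((Astar ∘ₗ A + Bstar ∘ₗ B) x) x -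
      (ip ((A + B) x) x ^ 2 + ip ((A - B) x) x ^ 2) / 2 = ip dA dA + ip dB dB := by
    have e1 : (Astar ∘ₗ A + Bstar ∘ₗ B) x = Astar (A x) + Bstar (B x) := by simp
    have e2 : (A + B) x = A x + B x := by simp
    have e3 : (A - B) x = A x - B x := by simp
    rw [e1, e2, e3, hadd' (Astar (A x)) (Bstar (B x)) x, hadd' (A x) (B x) x,
      hsub' (A x) (B x) x, hAx, hBx, hdA, hdB, key (A x), key (B x), ← ha, ← hb]
    field_simp
    ring
  rw [hE]
  set M := max (N dA) (N dB) with hM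
  have hMnonneg : 0 ≤ M := le_trans (hNnonneg dA) (le_max_left _ _)
  have h1 : v (ip dA dA + ip dB dB) ≤ M ^ 2 := by
    have hA' : v (ip dA dA) ≤ M ^ 2 := by
      calc v (ip dA dA) ≤ N dA * N dA := hcs dA dA
        _ ≤ M * M := mul_le_mul (le_max_left _ _) (le_max_left _ _) (hNnonneg dA) hMnonneg
        _ = M ^ 2 := (sq M).symm
    have hB' : v (ip dB dB) ≤ M ^ 2 := by
      calc v (ip dB dB) ≤ N dB * N dB := hcs dB dB
        _ ≤ M * M := mul_le_mul (le_max_right _ _) (le_max_right _ _) (hNnonneg dB) hMnonneg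
        _ = M ^ 2 := (sq M).symm
    exact le_trans (hna _ _) (max_le hA' hB')
  calc Real.sqrt (v (ip dA dA + ip dB dB)) ≤ Real.sqrt (M ^ 2) := Real.sqrt_le_sqrt h1
    _ = M := Real.sqrt_sq hMnonneg
end

section
/- Let A, B : X → X be self-adjoint linear operators. Then for every x ∈ X with ⟨x, x⟩ = 1 one has max{Δ_x(A), Δ_x(B)} ≥ √(|⟨(A² + B²)x, x⟩ − (⟨(A+B)x, x⟩² + ⟨(A−B)x, x⟩²)/2|), and this lower bound equals √(|(⟨(A+B)²x, x⟩ + ⟨(A−B)²x, x⟩ − ⟨(A+B)x, x⟩² − ⟨(A−B)x, x⟩²)/2|), where the outer |·| is the absolute value of K and √ is the real square root. -/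
/-- For self-adjoint `A B` and `⟨x, x⟩ = 1`, over a field of characteristic `≠ 2`:
`max{Δ_x(A), Δ_x(B)} ≥ √(|⟨(A² + B²)x, x⟩ − (⟨(A+B)x, x⟩² + ⟨(A−B)x, x⟩²)/2|)`, and this
lower bound equals
`√(|(⟨(A+B)²x, x⟩ + ⟨(A−B)²x, x⟩ − ⟨(A+B)x, x⟩² − ⟨(A−B)x, x⟩²)/2|)`. -/
theorem padic_uncertainty_selfadjoint_sum_form
    {K X : Type*} [Field K] [AddCommGroup X] [Module K X]
    (v : AbsoluteValue K ℝ) (hna : IsNonarchimedean v)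
    (N : X → ℝ)
    (hN_ultra : ∀ u w : X, N (u + w) ≤ max (N u) (N w))
    (hN_smul : ∀ (a : K) (u : X), N (a • u) = v a * N u)
    (ip : X → X → K)
    (hsymm : ∀ u w : X, ip u w = ip w u)
    (hadd : ∀ u w z : X, ip u (w + z) = ip u w + ip u z)
    (hsmul : ∀ (a : K) (u w : X), ip u (a • w) = a * ip u w)
    (hcs : ∀ u w : X, v (ip u w) ≤ N u * N w)
    (h2 : (2 : K) ≠ 0)
    (A B : X →ₗ[K] X)
    (hA : ∀ u w : X, ip (A u) w = ip u (A w))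
    (hB : ∀ u w : X, ip (B u) w = ip u (B w))
    (x : X) (hx : ip x x = 1) :
    max (N (A x - ip (A x) x • x)) (N (B x - ip (B x) x • x)) ≥
      Real.sqrt (v (ip ((A ∘ₗ A + B ∘ₗ B) x) x -
        (ip ((A + B) x) x ^ 2 + ip ((A - B) x) x ^ 2) / 2)) ∧
    Real.sqrt (v (ip ((A ∘ₗ A + B ∘ₗ B) x) x -
        (ip ((A + B) x) x ^ 2 + ip ((A - B) x) x ^ 2) / 2)) =
      Real.sqrt (v ((ip (((A + B) ∘ₗ (A + B)) x) x + ip (((A - B) ∘ₗ (A - B)) x) x -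
        ip ((A + B) x) x ^ 2 - ip ((A - B) x) x ^ 2) / 2)) := by
  -- basic bilinearity facts
  have ipadd' : ∀ u w z : X, ip (u + w) z = ip u z + ip w z := fun u w z => by
    rw [hsymm, hadd, hsymm z u, hsymm z w]
  have ipsmul' : ∀ (a : K) (u w : X), ip (a • u) w = a * ip u w := fun a u w => by
    rw [hsymm, hsmul, hsymm]
  have ipneg' : ∀ u w : X, ip (-u) w = - ip u w := fun u w => by
    rw [← neg_one_smul K u, ipsmul']; ring
  have ipsub' : ∀ u w z : X, ip (u - w) z = ip u z - ip w z := fun u w z => by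
    rw [sub_eq_add_neg, ipadd', ipneg']; ring
  have ipsub2 : ∀ u w z : X, ip u (w - z) = ip u w - ip u z := fun u w z => by
    rw [hsymm, ipsub', hsymm w u, hsymm z u]
  -- N is nonnegative
  have hN0 : N (0 : X) = 0 := by
    have := hN_smul 0 0; simpa using this
  have hNneg : ∀ u : X, N (-u) = N u := fun u => by
    have := hN_smul (-1) u
    simpa [map_neg, map_one] using this
  have hNnn : ∀ u : X, 0 ≤ N u := fun u => by
    have h := hN_ultra u (-u)
    rw [add_neg_cancel, hN0, hNneg] at h
    simpa using h
  -- key lemma: for self-adjoint C, v (ip ((C∘C)x) x - (ip (Cx) x)^2) ≤ Δ_x(C)^2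
  have key : ∀ C : X →ₗ[K] X, (∀ u w : X, ip (C u) w = ip u (C w)) →
      v (ip ((C ∘ₗ C) x) x - ip (C x) x ^ 2) ≤ N (C x - ip (C x) x • x) ^ 2 := by
    intro C hC
    set a := ip (C x) x with ha
    set y := C x - a • x with hy
    have h1 : ip (C x) (C x) = ip ((C ∘ₗ C) x) x := by
      rw [hC x (C x), hsymm]; simp [LinearMap.comp_apply]
    have hyy : ip y y = ip ((C ∘ₗ C) x) x - a ^ 2 := by
      rw [hy, ipsub', ipsub2, ipsub2, hsmul, ipsmul', ipsmul', hsmul, hx, ← h1, ← ha,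
        hsymm x (C x), ← ha]
      ring
    calc v (ip ((C ∘ₗ C) x) x - a ^ 2) = v (ip y y) := by rw [hyy]
      _ ≤ N y * N y := hcs y y
      _ = N y ^ 2 := (sq (N y)).symm
  set sa := ip (A x) x with hsa
  set sb := ip (B x) x with hsb
  have hab : ip ((A + B) x) x = sa + sb := by
    rw [LinearMap.add_apply, ipadd']
  have hab' : ip ((A - B) x) x = sa - sb := by
    rw [LinearMap.sub_apply, ipsub']
  constructor
  · -- first part
    have hEA := key A hA
    have hEB := key B hB
    set dA := N (A x - sa • x) with hdA
    set dB := N (B x - sb • x) with hdB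
    have hsplit : ip ((A ∘ₗ A + B ∘ₗ B) x) x -
        (ip ((A + B) x) x ^ 2 + ip ((A - B) x) x ^ 2) / 2 =
        (ip ((A ∘ₗ A) x) x - sa ^ 2) + (ip ((B ∘ₗ B) x) x - sb ^ 2) := by
      rw [hab, hab', LinearMap.add_apply, ipadd']
      field_simp
      ring
    have hmax : v (ip ((A ∘ₗ A + B ∘ₗ B) x) x -
        (ip ((A + B) x) x ^ 2 + ip ((A - B) x) x ^ 2) / 2) ≤ (max dA dB) ^ 2 := by
      rw [hsplit]
      refine le_trans (hna _ _) ?_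
      have h1 : v (ip ((A ∘ₗ A) x) x - sa ^ 2) ≤ (max dA dB) ^ 2 :=
        le_trans hEA (pow_le_pow_left₀ (hNnn _) (le_max_left _ _) 2)
      have h2' : v (ip ((B ∘ₗ B) x) x - sb ^ 2) ≤ (max dA dB) ^ 2 :=
        le_trans hEB (pow_le_pow_left₀ (hNnn _) (le_max_right _ _) 2)
      exact max_le h1 h2'
    have hmnn : 0 ≤ max dA dB := le_trans (hNnn _) (le_max_left _ _)
    calc Real.sqrt (v (ip ((A ∘ₗ A + B ∘ₗ B) x) x -
          (ip ((A + B) x) x ^ 2 + ip ((A - B) x) x ^ 2) / 2))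
        ≤ Real.sqrt ((max dA dB) ^ 2) := Real.sqrt_le_sqrt hmax
      _ = max dA dB := Real.sqrt_sq hmnn
  · -- second part: the two arguments of v are equal in K
    congr 2
    have e1 : ip (((A + B) ∘ₗ (A + B)) x) x =
        ip ((A ∘ₗ A) x) x + ip (A (B x)) x + ip (B (A x)) x + ip ((B ∘ₗ B) x) x := by
      simp only [LinearMap.comp_apply, LinearMap.add_apply, map_add, ipadd']
      ring
    have e2 : ip (((A - B) ∘ₗ (A - B)) x) x =
        ip ((A ∘ₗ A) x) x - ip (A (B x)) x - ip (B (A x)) x + ip ((B ∘ₗ B) x) x := by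
      simp only [LinearMap.comp_apply, LinearMap.sub_apply, map_sub, ipsub', ipsub2]
      ring
    rw [e1, e2, hab, hab', LinearMap.add_apply, ipadd']
    field_simp
    ring
end

section
/- Let A, B : X → X be linear operators admitting adjoints A*, B* : X → X (i.e. ⟨Au, v⟩ = ⟨u, A*v⟩ and ⟨Bu, v⟩ = ⟨u, B*v⟩ for all u, v ∈ X). Then for every x ∈ X with ⟨x, x⟩ = 1 one has max{Δ_x(A), Δ_x(B)} ≥ √(|⟨(A*A − B*B)x, x⟩ − ⟨(A+B)x, x⟩·⟨(A−B)x, x⟩|), where the outer |·| is the absolute value of K and √ is the real square root. -/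
/-- For adjointable `A B` (adjoints `A*`, `B*`) and `⟨x, x⟩ = 1`:
`max{Δ_x(A), Δ_x(B)} ≥ √(|⟨(A*A − B*B)x, x⟩ − ⟨(A+B)x, x⟩·⟨(A−B)x, x⟩|)`. -/
theorem padic_uncertainty_adjoint_difference_form
    {K X : Type*} [Field K] [AddCommGroup X] [Module K X]
    (v : AbsoluteValue K ℝ) (hna : IsNonarchimedean v)
    (N : X → ℝ)
    (hN_ultra : ∀ u w : X, N (u + w) ≤ max (N u) (N w))
    (hN_smul : ∀ (a : K) (u : X), N (a • u) = v a * N u)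
    (ip : X → X → K)
    (hsymm : ∀ u w : X, ip u w = ip w u)
    (hadd : ∀ u w z : X, ip u (w + z) = ip u w + ip u z)
    (hsmul : ∀ (a : K) (u w : X), ip u (a • w) = a * ip u w)
    (hcs : ∀ u w : X, v (ip u w) ≤ N u * N w)
    (A B Astar Bstar : X →ₗ[K] X)
    (hA : ∀ u w : X, ip (A u) w = ip u (Astar w))
    (hB : ∀ u w : X, ip (B u) w = ip u (Bstar w))
    (x : X) (hx : ip x x = 1) :
    max (N (A x - ip (A x) x • x)) (N (B x - ip (B x) x • x)) ≥
      Real.sqrt (v (ip ((Astar ∘ₗ A - Bstar ∘ₗ B) x) x -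
        ip ((A + B) x) x * ip ((A - B) x) x)) := by
  -- derived bilinearity facts
  have hsmul' : ∀ (a : K) (u w : X), ip (a • u) w = a * ip u w := by
    intro a u w; rw [hsymm, hsmul, hsymm]
  have hsub : ∀ u w z : X, ip u (w - z) = ip u w - ip u z := by
    intro u w z
    have : w - z = w + (-1 : K) • z := by
      rw [neg_one_smul]; abel
    rw [this, hadd, hsmul]; ring
  have hsub' : ∀ u w z : X, ip (u - w) z = ip u z - ip w z := by
    intro u w z; rw [hsymm, hsub, hsymm z u, hsymm z w]
  set a := ip (A x) x with ha
  set b := ip (B x) x with hb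
  set u := A x - a • x with hu
  set w := B x - b • x with hw
  -- N is nonnegative
  have hNneg : ∀ z : X, N (-z) = N z := by
    intro z
    have : (-z) = (-1 : K) • z := (neg_one_smul K z).symm
    rw [this, hN_smul, map_neg_eq_map, map_one, one_mul]
  have hN0 : N (0 : X) = 0 := by
    have := hN_smul (0 : K) 0
    simpa using this
  have hNnonneg : ∀ z : X, 0 ≤ N z := by
    intro z
    have h := hN_ultra z (-z)
    rw [add_neg_cancel, hN0, hNneg] at h
    simpa using h
  -- key algebraic identity
  have key : ip ((Astar ∘ₗ A - Bstar ∘ₗ B) x) x -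
      ip ((A + B) x) x * ip ((A - B) x) x = ip u u - ip w w := by
    have hAA : ip ((Astar ∘ₗ A) x) x = ip (A x) (A x) := by
      rw [hsymm, LinearMap.comp_apply, ← hA]
    have hBB : ip ((Bstar ∘ₗ B) x) x = ip (B x) (B x) := by
      rw [hsymm, LinearMap.comp_apply, ← hB]
    have hAB : ip ((A + B) x) x = a + b := by
      simp only [LinearMap.add_apply]
      rw [hsymm, hadd, hsymm x (A x), hsymm x (B x)]
    have hAB' : ip ((A - B) x) x = a - b := by
      simp only [LinearMap.sub_apply]
      rw [hsub', ← ha, ← hb]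
    have hL : ip ((Astar ∘ₗ A - Bstar ∘ₗ B) x) x
        = ip ((Astar ∘ₗ A) x) x - ip ((Bstar ∘ₗ B) x) x := by
      simp only [LinearMap.sub_apply]
      rw [hsub']
    have hxa : ip (A x) x = a := rfl
    have hxa' : ip x (A x) = a := by rw [hsymm]
    have hxb : ip (B x) x = b := rfl
    have hxb' : ip x (B x) = b := by rw [hsymm]
    have huu : ip u u = ip (A x) (A x) - a * a := by
      simp only [hu, hsub, hsub', hsmul, hsmul', hxa, hxa', hx]
      ring
    have hww : ip w w = ip (B x) (B x) - b * b := by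
      simp only [hw, hsub, hsub', hsmul, hsmul', hxb, hxb', hx]
      ring
    rw [hL, hAA, hBB, hAB, hAB', huu, hww]
    ring
  rw [key]
  set M := max (N u) (N w) with hM
  have hMnonneg : 0 ≤ M := le_trans (hNnonneg u) (le_max_left _ _)
  have hbound : v (ip u u - ip w w) ≤ M * M := by
    have h1 : v (ip u u - ip w w) ≤ max (v (ip u u)) (v (ip w w)) := by
      have := hna (ip u u) (-(ip w w))
      rw [map_neg_eq_map] at this
      simpa [sub_eq_add_neg] using this
    refine h1.trans (max_le ?_ ?_)
    · exact (hcs u u).trans (mul_le_mul (le_max_left _ _) (le_max_left _ _)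
        (hNnonneg u) hMnonneg)
    · exact (hcs w w).trans (mul_le_mul (le_max_right _ _) (le_max_right _ _)
        (hNnonneg w) hMnonneg)
  calc Real.sqrt (v (ip u u - ip w w)) ≤ Real.sqrt (M * M) :=
        Real.sqrt_le_sqrt hbound
    _ = M := Real.sqrt_mul_self hMnonneg
end

section
/- Let A, B : X → X be self-adjoint linear operators. Then for every x ∈ X with ⟨x, x⟩ = 1 one has max{Δ_x(A), Δ_x(B)} ≥ √(|⟨(A² − B²)x, x⟩ − ⟨(A+B)x, x⟩·⟨(A−B)x, x⟩|), where the outer |·| is the absolute value of K and √ is the real square root. -/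
/-- For self-adjoint `A B` and `⟨x, x⟩ = 1`:
`max{Δ_x(A), Δ_x(B)} ≥ √(|⟨(A² − B²)x, x⟩ − ⟨(A+B)x, x⟩·⟨(A−B)x, x⟩|)`. -/
theorem padic_uncertainty_selfadjoint_difference_form
    {K X : Type*} [Field K] [AddCommGroup X] [Module K X]
    (v : AbsoluteValue K ℝ) (hna : IsNonarchimedean v)
    (N : X → ℝ)
    (hN_ultra : ∀ u w : X, N (u + w) ≤ max (N u) (N w))
    (hN_smul : ∀ (a : K) (u : X), N (a • u) = v a * N u)
    (ip : X → X → K)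
    (hsymm : ∀ u w : X, ip u w = ip w u)
    (hadd : ∀ u w z : X, ip u (w + z) = ip u w + ip u z)
    (hsmul : ∀ (a : K) (u w : X), ip u (a • w) = a * ip u w)
    (hcs : ∀ u w : X, v (ip u w) ≤ N u * N w)
    (A B : X →ₗ[K] X)
    (hA : ∀ u w : X, ip (A u) w = ip u (A w))
    (hB : ∀ u w : X, ip (B u) w = ip u (B w))
    (x : X) (hx : ip x x = 1) :
    max (N (A x - ip (A x) x • x)) (N (B x - ip (B x) x • x)) ≥
      Real.sqrt (v (ip ((A ∘ₗ A - B ∘ₗ B) x) x -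
        ip ((A + B) x) x * ip ((A - B) x) x)) := by
  have hneg : ∀ u w : X, ip u (-w) = - ip u w := by
    intro u w
    have := hsmul (-1) u w
    simpa using this
  have hsub : ∀ u w z : X, ip u (w - z) = ip u w - ip u z := by
    intro u w z
    rw [sub_eq_add_neg, hadd, hneg, sub_eq_add_neg]
  have hadd₁ : ∀ u w z : X, ip (u + w) z = ip u z + ip w z := by
    intro u w z; rw [hsymm, hadd, hsymm z u, hsymm z w]
  have hsub₁ : ∀ u w z : X, ip (u - w) z = ip u z - ip w z := by
    intro u w z; rw [hsymm, hsub, hsymm z u, hsymm z w]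
  have hsmul₁ : ∀ (c : K) (u z : X), ip (c • u) z = c * ip u z := by
    intro c u z; rw [hsymm, hsmul, hsymm z u]
  set a := ip (A x) x with ha
  set b := ip (B x) x with hb
  set u := A x - a • x with hu
  set w := B x - b • x with hw
  -- N is nonneg on any vector
  have hNzero : N (0 : X) = 0 := by
    have := hN_smul 0 x; simpa using this
  have hNneg : ∀ z : X, N (-z) = N z := by
    intro z
    have := hN_smul (-1) z; simpa using this
  have hNnn : ∀ z : X, 0 ≤ N z := by
    intro z
    have h := hN_ultra z (-z)
    simp [hNzero, hNneg] at h
    linarith [h]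
  -- key inner product computations
  have huu : ip u u = ip (A x) (A x) - a * a := by
    rw [hu, hsub, hsmul, hsub₁, hsub₁, hsmul₁, hsmul₁, hx, hsymm x (A x), ← ha]
    ring
  have hww : ip w w = ip (B x) (B x) - b * b := by
    rw [hw, hsub, hsmul, hsub₁, hsub₁, hsmul₁, hsmul₁, hx, hsymm x (B x), ← hb]
    ring
  have hkey : ip ((A ∘ₗ A - B ∘ₗ B) x) x - ip ((A + B) x) x * ip ((A - B) x) x
      = ip u u - ip w w := by
    have e1 : (A ∘ₗ A - B ∘ₗ B) x = A (A x) - B (B x) := by simp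
    have e2 : (A + B) x = A x + B x := by simp
    have e3 : (A - B) x = A x - B x := by simp
    rw [e1, e2, e3, hsub₁, hadd₁, hsub₁, hA, hB, huu, hww, ← ha, ← hb]
    ring
  set M := max (N u) (N w) with hM
  have hMnn : 0 ≤ M := le_trans (hNnn u) (le_max_left _ _)
  have hbound : v (ip u u - ip w w) ≤ M * M := by
    have h1 : v (ip u u) ≤ N u * N u := hcs u u
    have h2 : v (ip w w) ≤ N w * N w := hcs w w
    have h3 : v (ip u u - ip w w) ≤ max (v (ip u u)) (v (ip w w)) := by
      have := hna (ip u u) (-(ip w w))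
      simpa [sub_eq_add_neg] using this
    have h4 : N u * N u ≤ M * M :=
      mul_le_mul (le_max_left _ _) (le_max_left _ _) (hNnn u) hMnn
    have h5 : N w * N w ≤ M * M :=
      mul_le_mul (le_max_right _ _) (le_max_right _ _) (hNnn w) hMnn
    calc v (ip u u - ip w w) ≤ max (v (ip u u)) (v (ip w w)) := h3
      _ ≤ M * M := max_le (le_trans h1 h4) (le_trans h2 h5)
  rw [hkey]
  calc Real.sqrt (v (ip u u - ip w w)) ≤ Real.sqrt (M * M) :=
        Real.sqrt_le_sqrt hbound
    _ = M := Real.sqrt_mul_self hMnn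
end

section
/- Let A, B : X → X be linear operators. Then for every x ∈ X with ⟨x, x⟩ = 1 one has max{Δ_x(A), Δ_x(B)} ≥ √(|⟨(A+B)x, (A+B)x⟩ − ⟨(A+B)x, x⟩²|), where the outer |·| is the absolute value of K and √ is the real square root. -/
/-- For linear operators `A B` and `⟨x, x⟩ = 1`:
`max{Δ_x(A), Δ_x(B)} ≥ √(|⟨(A+B)x, (A+B)x⟩ − ⟨(A+B)x, x⟩²|)`. -/
theorem padic_uncertainty_sum_inner_form
    {K X : Type*} [Field K] [AddCommGroup X] [Module K X]
    (v : AbsoluteValue K ℝ) (hna : IsNonarchimedean v)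
    (N : X → ℝ)
    (hN_ultra : ∀ u w : X, N (u + w) ≤ max (N u) (N w))
    (hN_smul : ∀ (a : K) (u : X), N (a • u) = v a * N u)
    (ip : X → X → K)
    (hsymm : ∀ u w : X, ip u w = ip w u)
    (hadd : ∀ u w z : X, ip u (w + z) = ip u w + ip u z)
    (hsmul : ∀ (a : K) (u w : X), ip u (a • w) = a * ip u w)
    (hcs : ∀ u w : X, v (ip u w) ≤ N u * N w)
    (A B : X →ₗ[K] X)
    (x : X) (hx : ip x x = 1) :
    max (N (A x - ip (A x) x • x)) (N (B x - ip (B x) x • x)) ≥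
      Real.sqrt (v (ip ((A + B) x) ((A + B) x) - ip ((A + B) x) x ^ 2)) := by
  -- subtraction lemmas for ip
  have hsub : ∀ u w z : X, ip u (w - z) = ip u w - ip u z := by
    intro u w z
    have h : w - z = w + (-1 : K) • z := by
      simp [sub_eq_add_neg]
    rw [h, hadd, hsmul]; ring
  have hsub1 : ∀ u w z : X, ip (w - z) u = ip w u - ip z u := by
    intro u w z
    rw [hsymm, hsub, hsymm u w, hsymm u z]
  have hsmul1 : ∀ (a : K) (u w : X), ip (a • w) u = a * ip w u := by
    intro a u w
    rw [hsymm, hsmul, hsymm]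
  -- N is nonneg
  have hN0 : N (0 : X) = 0 := by
    have := hN_smul 0 0
    simpa using this
  have hNneg : ∀ z : X, 0 ≤ N z := by
    intro z
    have hneg : N (-z) = N z := by
      have := hN_smul (-1) z
      simpa using this
    have h := hN_ultra z (-z)
    simp [hN0, hneg] at h
    linarith [h]
  set y := (A + B) x with hy
  set c := ip y x with hc
  set z := y - c • x with hz
  have key : ip z z = ip y y - c ^ 2 := by
    have h1 : ip x z = 0 := by
      rw [hz, hsub, hsmul, hx, hsymm x y, ← hc]; ring
    have h2 : ip y z = ip y y - c * c := by
      rw [hz, hsub, hsmul, ← hc]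
    rw [hz, hsub1, hsmul1, hz] at *
    rw [← hz] at h1 h2 ⊢
    rw [h1, h2]; ring
  have hle : Real.sqrt (v (ip y y - c ^ 2)) ≤ N z := by
    rw [← key]
    calc Real.sqrt (v (ip z z)) ≤ Real.sqrt (N z * N z) :=
          Real.sqrt_le_sqrt (hcs z z)
      _ = N z := Real.sqrt_mul_self (hNneg z)
  -- decompose z
  have hdec : z = (A x - ip (A x) x • x) + (B x - ip (B x) x • x) := by
    have hyy : y = A x + B x := by simp [hy]
    have hcc : c = ip (A x) x + ip (B x) x := by
      rw [hc, hyy, hsymm, hadd, hsymm x (A x), hsymm x (B x)]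
    rw [hz, hyy, hcc, add_smul]
    abel
  have hmax : N z ≤ max (N (A x - ip (A x) x • x)) (N (B x - ip (B x) x • x)) := by
    rw [hdec]; exact hN_ultra _ _
  exact le_trans hle hmax
end

section
/- Let A, B : X → X be linear operators. Then for every x ∈ X with ⟨x, x⟩ = 1 one has max{Δ_x(A), Δ_x(B)} ≥ √(|⟨(A−B)x, (A−B)x⟩ − ⟨(A−B)x, x⟩²|), where the outer |·| is the absolute value of K and √ is the real square root. -/
/-- For linear operators `A B` and `⟨x, x⟩ = 1`:
`max{Δ_x(A), Δ_x(B)} ≥ √(|⟨(A−B)x, (A−B)x⟩ − ⟨(A−B)x, x⟩²|)`. -/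
theorem padic_uncertainty_difference_inner_form
    {K X : Type*} [Field K] [AddCommGroup X] [Module K X]
    (v : AbsoluteValue K ℝ) (hna : IsNonarchimedean v)
    (N : X → ℝ)
    (hN_ultra : ∀ u w : X, N (u + w) ≤ max (N u) (N w))
    (hN_smul : ∀ (a : K) (u : X), N (a • u) = v a * N u)
    (ip : X → X → K)
    (hsymm : ∀ u w : X, ip u w = ip w u)
    (hadd : ∀ u w z : X, ip u (w + z) = ip u w + ip u z)
    (hsmul : ∀ (a : K) (u w : X), ip u (a • w) = a * ip u w)
    (hcs : ∀ u w : X, v (ip u w) ≤ N u * N w)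
    (A B : X →ₗ[K] X)
    (x : X) (hx : ip x x = 1) :
    max (N (A x - ip (A x) x • x)) (N (B x - ip (B x) x • x)) ≥
      Real.sqrt (v (ip ((A - B) x) ((A - B) x) - ip ((A - B) x) x ^ 2)) := by
  set a := ip (A x) x with ha
  set b := ip (B x) x with hb
  set u := A x - a • x with hu
  set w := B x - b • x with hw
  have hipsub : ∀ p q r : X, ip p (q - r) = ip p q - ip p r := by
    intro p q r
    rw [sub_eq_add_neg, hadd, ← neg_one_smul K r, hsmul]; ring
  have hxu : ip x u = 0 := by
    rw [hu, hipsub, hsmul, hx, hsymm x (A x), ← ha]; ring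
  have hxw : ip x w = 0 := by
    rw [hw, hipsub, hsmul, hx, hsymm x (B x), ← hb]; ring
  set d := u - w with hd
  have hxd : ip x d = 0 := by rw [hd, hipsub, hxu, hxw]; ring
  set c := a - b with hc
  have hy : (A - B) x = d + c • x := by
    simp only [LinearMap.sub_apply, hd, hu, hw, hc, sub_smul]
    abel
  have hyx : ip ((A - B) x) x = c := by
    rw [hsymm, hy, hadd, hsmul, hxd, hx]; ring
  have h1 : ip (d + c • x) x = c := by
    rw [hsymm, hadd, hsmul, hxd, hx]; ring
  have h2 : ip (d + c • x) d = ip d d := by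
    rw [hsymm, hadd, hsmul, hsymm d x, hxd]; ring
  have hyy : ip ((A - B) x) ((A - B) x) = ip d d + c * c := by
    conv_lhs => rw [hy, hadd, hsmul]
    rw [h1, h2]
  have key : ip ((A - B) x) ((A - B) x) - ip ((A - B) x) x ^ 2 = ip d d := by
    rw [hyy, hyx]; ring
  -- nonnegativity of N
  have hN0 : N (0 : X) = 0 := by
    have := hN_smul 0 0
    simpa using this
  have hNneg : ∀ z : X, N (-z) = N z := by
    intro z
    have := hN_smul (-1) z
    simpa using this
  have hNnonneg : ∀ z : X, 0 ≤ N z := by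
    intro z
    have h := hN_ultra z (-z)
    simp [hN0, hNneg] at h
    linarith [le_max_left (N z) (N z), h]
  set M := max (N u) (N w) with hM
  have hMnonneg : 0 ≤ M := le_trans (hNnonneg u) (le_max_left _ _)
  have hNd : N d ≤ M := by
    have h := hN_ultra u (-w)
    rw [hNneg] at h
    rw [hd, sub_eq_add_neg]
    exact h
  have hv : v (ip d d) ≤ M * M := by
    calc v (ip d d) ≤ N d * N d := hcs d d
    _ ≤ M * M := mul_le_mul hNd hNd (hNnonneg d) hMnonneg
  rw [key]
  calc Real.sqrt (v (ip d d)) ≤ Real.sqrt (M * M) := Real.sqrt_le_sqrt hv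
  _ = M := Real.sqrt_mul_self hMnonneg
end

section
/- (p-adic Maccone–Pati uncertainty principle, sum form) Let A, B : X → X be linear operators. Then for every x ∈ X with ⟨x, x⟩ = 1 and every y ∈ X with ‖y‖ ≤ 1 and ⟨x, y⟩ = 0, one has max{Δ_x(A), Δ_x(B)} ≥ |⟨(A+B)x, y⟩|. -/
/-- **p-adic Maccone–Pati uncertainty principle (sum form).**
For linear operators `A B`, `⟨x, x⟩ = 1`, and any `y` with `‖y‖ ≤ 1` and `⟨x, y⟩ = 0`:
`max{Δ_x(A), Δ_x(B)} ≥ |⟨(A+B)x, y⟩|`. -/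
theorem padic_maccone_pati_sum
    {K X : Type*} [Field K] [AddCommGroup X] [Module K X]
    (v : AbsoluteValue K ℝ) (hna : IsNonarchimedean v)
    (N : X → ℝ)
    (hN_ultra : ∀ u w : X, N (u + w) ≤ max (N u) (N w))
    (hN_smul : ∀ (a : K) (u : X), N (a • u) = v a * N u)
    (ip : X → X → K)
    (hsymm : ∀ u w : X, ip u w = ip w u)
    (hadd : ∀ u w z : X, ip u (w + z) = ip u w + ip u z)
    (hsmul : ∀ (a : K) (u w : X), ip u (a • w) = a * ip u w)
    (hcs : ∀ u w : X, v (ip u w) ≤ N u * N w)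
    (A B : X →ₗ[K] X)
    (x : X) (hx : ip x x = 1)
    (y : X) (hy : N y ≤ 1) (hxy : ip x y = 0) :
    max (N (A x - ip (A x) x • x)) (N (B x - ip (B x) x • x)) ≥
      v (ip ((A + B) x) y) := by
  -- N is nonnegative
  have hN0 : N 0 = 0 := by
    have := hN_smul (0 : K) 0
    simpa using this
  have hNneg : ∀ u : X, N (-u) = N u := by
    intro u
    have := hN_smul (-1 : K) u
    simpa using this
  have hNnonneg : ∀ u : X, 0 ≤ N u := by
    intro u
    have h := hN_ultra u (-u)
    simp [hNneg, hN0] at h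
    linarith [h]
  have hyx : ip y x = 0 := by rw [hsymm]; exact hxy
  -- key: ip y (T x - ip (T x) x • x) = ip y (T x)
  have key : ∀ z : X, ip y (z - ip z x • x) = ip y z := by
    intro z
    have : z - ip z x • x = z + (-(ip z x)) • x := by
      rw [neg_smul, sub_eq_add_neg]
    rw [this, hadd, hsmul, hyx]
    ring
  set a := A x - ip (A x) x • x with ha
  set b := B x - ip (B x) x • x with hb
  have hsum : ip ((A + B) x) y = ip y a + ip y b := by
    rw [key, key, ← hadd, hsymm]
    simp
  rw [hsum]
  have h1 : v (ip y a) ≤ N a := by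
    calc v (ip y a) ≤ N y * N a := hcs y a
    _ ≤ 1 * N a := mul_le_mul_of_nonneg_right hy (hNnonneg a)
    _ = N a := one_mul _
  have h2 : v (ip y b) ≤ N b := by
    calc v (ip y b) ≤ N y * N b := hcs y b
    _ ≤ 1 * N b := mul_le_mul_of_nonneg_right hy (hNnonneg b)
    _ = N b := one_mul _
  calc v (ip y a + ip y b) ≤ max (v (ip y a)) (v (ip y b)) := hna _ _
  _ ≤ max (N a) (N b) := max_le_max h1 h2
end

section
/- (p-adic Maccone–Pati uncertainty principle, difference form) Let A, B : X → X be linear operators. Then for every x ∈ X with ⟨x, x⟩ = 1 and every y ∈ X with ‖y‖ ≤ 1 and ⟨x, y⟩ = 0, one has max{Δ_x(A), Δ_x(B)} ≥ |⟨(A−B)x, y⟩|. -/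
/-- **p-adic Maccone–Pati uncertainty principle (difference form).**
For linear operators `A B`, `⟨x, x⟩ = 1`, and any `y` with `‖y‖ ≤ 1` and `⟨x, y⟩ = 0`:
`max{Δ_x(A), Δ_x(B)} ≥ |⟨(A−B)x, y⟩|`. -/
theorem padic_maccone_pati_difference
    {K X : Type*} [Field K] [AddCommGroup X] [Module K X]
    (v : AbsoluteValue K ℝ) (hna : IsNonarchimedean v)
    (N : X → ℝ)
    (hN_ultra : ∀ u w : X, N (u + w) ≤ max (N u) (N w))
    (hN_smul : ∀ (a : K) (u : X), N (a • u) = v a * N u)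
    (ip : X → X → K)
    (hsymm : ∀ u w : X, ip u w = ip w u)
    (hadd : ∀ u w z : X, ip u (w + z) = ip u w + ip u z)
    (hsmul : ∀ (a : K) (u w : X), ip u (a • w) = a * ip u w)
    (hcs : ∀ u w : X, v (ip u w) ≤ N u * N w)
    (A B : X →ₗ[K] X)
    (x : X) (hx : ip x x = 1)
    (y : X) (hy : N y ≤ 1) (hxy : ip x y = 0) :
    max (N (A x - ip (A x) x • x)) (N (B x - ip (B x) x • x)) ≥
      v (ip ((A - B) x) y) := by
  -- N is nonnegative
  have hN0 : N 0 = 0 := by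
    have := hN_smul 0 0; simpa using this
  have hNnonneg : ∀ u : X, 0 ≤ N u := by
    intro u
    have h1 : N (-u) = N u := by
      have := hN_smul (-1) u; simpa using this
    have := hN_ultra u (-u)
    simp only [add_neg_cancel, hN0, h1, max_self] at this
    linarith
  -- key: ip (u - ip u x • x) y = ip u y
  have key : ∀ u : X, ip (u - ip u x • x) y = ip u y := by
    intro u
    rw [hsymm, sub_eq_add_neg, hadd, hsymm y u, ← neg_smul, hsmul]
    rw [hsymm y x, hxy]
    ring
  -- bound each term
  have bound : ∀ u : X, v (ip u y) ≤ N (u - ip u x • x) := by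
    intro u
    rw [← key u]
    calc v (ip (u - ip u x • x) y) ≤ N (u - ip u x • x) * N y := hcs _ _
      _ ≤ N (u - ip u x • x) * 1 := by
          exact mul_le_mul_of_nonneg_left hy (hNnonneg _)
      _ = _ := mul_one _
  have hsplit : ip ((A - B) x) y = ip (A x) y - ip (B x) y := by
    have : (A - B) x = A x + (-1 : K) • B x := by
      simp [sub_eq_add_neg]
    rw [this, hsymm, hadd, hsymm y (A x), hsmul, hsymm y (B x)]
    ring
  rw [ge_iff_le, hsplit, sub_eq_add_neg]
  have hvneg : v (-(ip (B x) y)) = v (ip (B x) y) := by simp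
  calc v (ip (A x) y + -(ip (B x) y))
      ≤ max (v (ip (A x) y)) (v (-(ip (B x) y))) := hna _ _
    _ = max (v (ip (A x) y)) (v (ip (B x) y)) := by rw [hvneg]
    _ ≤ max (N (A x - ip (A x) x • x)) (N (B x - ip (B x) x • x)) :=
        max_le_max (bound (A x)) (bound (B x))
end

section
/- Let A : X → X be a linear operator. Then for every x ∈ X with ⟨x, x⟩ = 1 one has Δ_x(A) ≥ √(|⟨Ax, Ax⟩ − ⟨Ax, x⟩²|), where the outer |·| is the absolute value of K and √ is the real square root. -/
/-- For a linear operator `A` and `⟨x, x⟩ = 1`: `Δ_x(A) ≥ √(|⟨Ax, Ax⟩ − ⟨Ax, x⟩²|)`. -/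
theorem padic_uncertainty_single_operator_lower_bound
    {K X : Type*} [Field K] [AddCommGroup X] [Module K X]
    (v : AbsoluteValue K ℝ) (hna : IsNonarchimedean v)
    (N : X → ℝ)
    (hN_ultra : ∀ u w : X, N (u + w) ≤ max (N u) (N w))
    (hN_smul : ∀ (a : K) (u : X), N (a • u) = v a * N u)
    (ip : X → X → K)
    (hsymm : ∀ u w : X, ip u w = ip w u)
    (hadd : ∀ u w z : X, ip u (w + z) = ip u w + ip u z)
    (hsmul : ∀ (a : K) (u w : X), ip u (a • w) = a * ip u w)
    (hcs : ∀ u w : X, v (ip u w) ≤ N u * N w)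
    (A : X →ₗ[K] X)
    (x : X) (hx : ip x x = 1) :
    N (A x - ip (A x) x • x) ≥ Real.sqrt (v (ip (A x) (A x) - ip (A x) x ^ 2)) := by
  set c := ip (A x) x with hc
  set d := A x - c • x with hd
  -- N is nonnegative
  have hN0 : N 0 = 0 := by
    have := hN_smul 0 0
    simpa using this
  have hNneg : ∀ u : X, N (-u) = N u := by
    intro u
    have := hN_smul (-1) u
    simpa using this
  have hNnn : ∀ u : X, 0 ≤ N u := by
    intro u
    have h := hN_ultra u (-u)
    rw [add_neg_cancel, hN0, hNneg] at h
    simpa using h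
  -- compute ip d d
  have hexp : ip d d = ip (A x) (A x) - c ^ 2 := by
    have hd' : d = A x + (-c) • x := by rw [hd, neg_smul, ← sub_eq_add_neg]
    have hL : ∀ (u w z : X) (a : K), ip (u + a • w) z = ip u z + a * ip w z := by
      intro u w z a
      rw [hsymm, hadd, hsmul, hsymm z u, hsymm z w]
    rw [hd', hadd, hsmul, hL, hL, hsymm x (A x), ← hc, hx]
    ring
  have hb : v (ip (A x) (A x) - c ^ 2) ≤ N d * N d := by
    rw [← hexp]; exact hcs d d
  have : Real.sqrt (v (ip (A x) (A x) - c ^ 2)) ≤ Real.sqrt (N d * N d) :=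
    Real.sqrt_le_sqrt hb
  rwa [Real.sqrt_mul_self (hNnn d)] at this
end
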